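/- Let K be a number field with set V of finite places, B > 0, and f : V → ℝ with |f_v| ≤ B for all v. Write L(s) = −log(s−1), Z₂(s) = Σ_{v∈V} f_v² q_v^{-s}, Z₁(s) = Σ_{v∈V} f_v q_v^{-s}, and 𝓕 = {v | f_v < 0}. If m and M are real numbers with m ≤ limsup_{s→1⁺} Z₂(s)/L(s) and limsup_{s→1⁺} Z₁(s)/L(s) ≤ M, then the upper Dirichlet density of 𝓕 satisfies δ̄(𝓕) ≥ (m − M·B)/(2B²). -/

import Mathlib

open IsDedekindDomain NumberField Filter Topology

/-- The absolute norm `q_v` of a finite place (nonzero prime ideal) of a number field. -/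
noncomputable def qv {K : Type*} [Field K] [NumberField K]
    (v : HeightOneSpectrum (RingOfIntegers K)) : ℝ :=
  (Ideal.absNorm v.asIdeal : ℝ)

set_option synthInstance.maxHeartbeats 800000
set_option maxHeartbeats 1000000
set_option linter.unusedSectionVars false
set_option linter.unusedTactic false

section helpers

noncomputable def rpowHom (s : ℝ) (hs : s ≠ 0) : ℕ →*₀ ℝ where
  toFun n := (n : ℝ) ^ (-s)
  map_zero' := by simp [Real.zero_rpow (neg_ne_zero.mpr hs)]
  map_one' := by simp
  map_mul' a b := by push_cast; exact Real.mul_rpow (by positivity) (by positivity)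

lemma summable_primes_rpow {s : ℝ} (hs : 1 < s) :
    Summable (fun p : Nat.Primes => (p : ℝ) ^ (-s)) :=
  (Real.summable_nat_rpow.mpr (by linarith)).subtype _

lemma primes_rpow_le_log {s : ℝ} (hs : 1 < s) (hs' : s ≤ 5/4)
    (hz : (s - 1) * ∑' (n : ℕ), 1 / (n : ℝ) ^ s ≤ 2) :
    (∑' p : Nat.Primes, (p : ℝ) ^ (-s)) ≤ 2 * (-Real.log (s - 1)) := by
  have hs0 : s ≠ 0 := by linarith
  set Z : ℝ := ∑' (n : ℕ), 1 / (n : ℝ) ^ s with hZ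
  have hsumZ : Summable (fun n : ℕ => 1 / (n : ℝ) ^ s) :=
    Real.summable_one_div_nat_rpow.mpr hs
  have hZ1 : (1 : ℝ) ≤ Z := by
    have := Summable.le_tsum hsumZ 1 (fun i _ => by positivity)
    simpa [hZ] using this
  -- bounds on x_p := p^{-s}
  have hxpos : ∀ p : Nat.Primes, (0:ℝ) < (p : ℝ) ^ (-s) := by
    intro p
    have : (0:ℝ) < (p : ℕ) := by exact_mod_cast p.2.pos
    positivity
  have hxlt : ∀ p : Nat.Primes, (p : ℝ) ^ (-s) ≤ 1/2 := by
    intro p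
    have h2 : (2 : ℝ) ≤ ((p : ℕ) : ℝ) := by exact_mod_cast p.2.two_le
    calc (p : ℝ) ^ (-s) ≤ (2 : ℝ) ^ (-s) :=
          Real.rpow_le_rpow_of_nonpos (by norm_num) h2 (by linarith)
      _ ≤ (2:ℝ) ^ (-1 : ℝ) :=
          Real.rpow_le_rpow_of_exponent_le (by norm_num) (by linarith)
      _ = 1/2 := by
          rw [Real.rpow_neg_one]; norm_num
  have h1x : ∀ p : Nat.Primes, (0:ℝ) < 1 - (p : ℝ) ^ (-s) := by
    intro p; have := hxlt p; linarith
  set g : Nat.Primes → ℝ := fun p => -Real.log (1 - (p : ℝ) ^ (-s)) with hg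
  have hxg : ∀ p : Nat.Primes, ((p:ℕ) : ℝ) ^ (-s) ≤ g p := by
    intro p
    have := Real.log_le_sub_one_of_pos (h1x p)
    simp only [hg]; linarith
  have hgpos : ∀ p, 0 ≤ g p := fun p => le_trans (hxpos p).le (hxg p)
  have hgle : ∀ p : Nat.Primes, g p ≤ 2 * ((p:ℕ) : ℝ) ^ (-s) := by
    intro p
    have h1 := Real.one_sub_inv_le_log_of_pos (h1x p)
    set x := ((p:ℕ) : ℝ) ^ (-s) with hx
    have hx2 : x ≤ 1/2 := hxlt p
    have hxp : 0 < x := hxpos p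
    have hinv : (1 - x)⁻¹ ≤ 2 := by
      rw [inv_le_comm₀ (by linarith) (by norm_num)]
      linarith
    have hmul : (1 - x) * (1 - x)⁻¹ = 1 := mul_inv_cancel₀ (by linarith)
    have hxinv : x * (1 - x)⁻¹ ≤ 2 * x := by nlinarith
    simp only [hg]
    nlinarith
  have hsum : Summable (fun p : Nat.Primes => (p : ℝ) ^ (-s)) := summable_primes_rpow hs
  have hsumg : Summable g :=
    Summable.of_nonneg_of_le hgpos hgle (hsum.mul_left 2)
  -- Euler product: exp (∑ g) = Z
  have hnorm : Summable fun n => ‖(rpowHom s hs0) n‖ := by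
    have : Summable (fun n : ℕ => (n:ℝ) ^ (-s)) := Real.summable_nat_rpow.mpr (by linarith)
    apply this.congr
    intro n
    simp only [rpowHom, MonoidWithZeroHom.coe_mk, ZeroHom.coe_mk, Real.norm_eq_abs]
    rw [abs_of_nonneg (by positivity)]
  have heuler := EulerProduct.eulerProduct_completely_multiplicative_tprod (f := rpowHom s hs0) hnorm
  have hexp : Real.exp (∑' p, g p) = Z := by
    have hp : HasProd (Real.exp ∘ g) (Real.exp (∑' p, g p)) := hsumg.hasSum.rexp
    have hcongr : (Real.exp ∘ g) = fun p : Nat.Primes => (1 - (rpowHom s hs0) (p:ℕ))⁻¹ := by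
      funext p
      simp only [Function.comp_apply, hg, Real.exp_neg, Real.exp_log (h1x p), rpowHom,
        MonoidWithZeroHom.coe_mk, ZeroHom.coe_mk]
    rw [hcongr] at hp
    rw [hp.tprod_eq] at heuler
    rw [heuler]
    simp only [hZ, rpowHom, MonoidWithZeroHom.coe_mk, ZeroHom.coe_mk]
    apply tsum_congr
    intro n
    rw [Real.rpow_neg (Nat.cast_nonneg n), one_div]
  have hlog : (∑' p, g p) = Real.log Z := by
    rw [← hexp, Real.log_exp]
  have hZle : Z ≤ 2 / (s-1) := by
    rw [le_div_iff₀ (by linarith)]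
    linarith [hz]
  have hs1 : (0:ℝ) < s - 1 := by linarith
  have hlogZ : Real.log Z ≤ Real.log 2 - Real.log (s-1) := by
    rw [← Real.log_div (by norm_num) hs1.ne']
    exact Real.log_le_log (by linarith) hZle
  have hlog2 : Real.log 2 ≤ -Real.log (s-1) := by
    rw [← Real.log_inv]
    apply Real.log_le_log (by norm_num)
    rw [le_inv_comm₀ (by norm_num) (by linarith)]
    linarith
  calc (∑' p : Nat.Primes, (p : ℝ) ^ (-s)) ≤ ∑' p, g p := Summable.tsum_le_tsum hxg hsum hsumg
    _ = Real.log Z := hlog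
    _ ≤ Real.log 2 - Real.log (s-1) := hlogZ
    _ ≤ 2 * (-Real.log (s-1)) := by linarith

variable {K : Type*} [Field K] [NumberField K]

lemma absNorm_ne_zero (v : HeightOneSpectrum (RingOfIntegers K)) :
    Ideal.absNorm v.asIdeal ≠ 0 := by
  rw [Ne, Ideal.absNorm_eq_zero_iff]; exact v.ne_bot

noncomputable instance (v : HeightOneSpectrum (RingOfIntegers K)) :
    Fintype (RingOfIntegers K ⧸ v.asIdeal) := by
  have := (Ideal.absNorm_ne_zero_iff v.asIdeal).mp (absNorm_ne_zero v)
  exact Fintype.ofFinite _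

/-- The residue characteristic of a finite place. -/
noncomputable def resChar (v : HeightOneSpectrum (RingOfIntegers K)) : ℕ :=
  ringChar (RingOfIntegers K ⧸ v.asIdeal)

lemma resChar_spec (v : HeightOneSpectrum (RingOfIntegers K)) :
    ∃ k : ℕ, 0 < k ∧ Nat.Prime (resChar v) ∧ Ideal.absNorm v.asIdeal = resChar v ^ k := by
  letI : Field (RingOfIntegers K ⧸ v.asIdeal) := Ideal.Quotient.field v.asIdeal
  haveI : CharP (RingOfIntegers K ⧸ v.asIdeal) (resChar v) := ringChar.charP _
  obtain ⟨n, hp, hcard⟩ := FiniteField.card (RingOfIntegers K ⧸ v.asIdeal) (resChar v)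
  refine ⟨n, n.2, hp, ?_⟩
  rw [Ideal.absNorm_apply, Submodule.cardQuot_apply, Nat.card_eq_fintype_card, hcard]

lemma resChar_mem (v : HeightOneSpectrum (RingOfIntegers K)) :
    ((resChar v : ℕ) : RingOfIntegers K) ∈ v.asIdeal := by
  haveI : CharP (RingOfIntegers K ⧸ v.asIdeal) (resChar v) := ringChar.charP _
  rw [← Ideal.Quotient.eq_zero_iff_mem, map_natCast]
  exact CharP.cast_eq_zero (RingOfIntegers K ⧸ v.asIdeal) (resChar v)

lemma resChar_eq_of_mem (v : HeightOneSpectrum (RingOfIntegers K)) {p : ℕ} (hp : p.Prime)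
    (h : ((p : ℕ) : RingOfIntegers K) ∈ v.asIdeal) : resChar v = p := by
  letI : Field (RingOfIntegers K ⧸ v.asIdeal) := Ideal.Quotient.field v.asIdeal
  apply CharP.ringChar_of_prime_eq_zero hp
  rw [← map_natCast (Ideal.Quotient.mk v.asIdeal), Ideal.Quotient.eq_zero_iff_mem]
  exact h

lemma two_le_absNorm (v : HeightOneSpectrum (RingOfIntegers K)) :
    2 ≤ Ideal.absNorm v.asIdeal := by
  obtain ⟨k, hk, hp, he⟩ := resChar_spec v
  rw [he]
  calc 2 ≤ resChar v := hp.two_le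
    _ = resChar v ^ 1 := (pow_one _).symm
    _ ≤ resChar v ^ k := Nat.pow_le_pow_right (by have := hp.two_le; omega) hk

lemma resChar_le_absNorm (v : HeightOneSpectrum (RingOfIntegers K)) :
    resChar v ≤ Ideal.absNorm v.asIdeal := by
  obtain ⟨k, hk, hp, he⟩ := resChar_spec v
  rw [he]
  calc resChar v = resChar v ^ 1 := (pow_one _).symm
    _ ≤ resChar v ^ k := Nat.pow_le_pow_right (by have := hp.two_le; omega) hk

variable (K) in
/-- The degree bound: rank of the ring of integers. -/
noncomputable def dK : ℕ := Fintype.card (Module.Free.ChooseBasisIndex ℤ (RingOfIntegers K))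

lemma absNorm_span_natCast (p : ℕ) :
    Ideal.absNorm (Ideal.span {((p : ℕ) : RingOfIntegers K)}) = p ^ dK K := by
  rw [Ideal.absNorm_span_singleton]
  rw [show ((p : ℕ) : RingOfIntegers K) = algebraMap ℤ (RingOfIntegers K) (p : ℤ) by
    rw [map_natCast]]
  rw [Algebra.norm_algebraMap_of_basis (Module.Free.chooseBasis ℤ (RingOfIntegers K))]
  rw [dK]
  push_cast
  rw [Int.natAbs_pow]
  rfl

lemma card_fiber_le {p : ℕ} (hp : p.Prime) (t : Finset (HeightOneSpectrum (RingOfIntegers K)))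
    (ht : ∀ v ∈ t, resChar v = p) : t.card ≤ dK K := by
  have hmem : ∀ v ∈ t, ((p : ℕ) : RingOfIntegers K) ∈ v.asIdeal := fun v hv => by
    rw [← ht v hv]; exact resChar_mem v
  have hcop : (↑t : Set _).Pairwise (Function.onFun IsCoprime fun v : HeightOneSpectrum (RingOfIntegers K) => v.asIdeal) := by
    intro v _ w _ hne
    exact Ideal.isCoprime_iff_sup_eq.mpr
      (Ideal.IsMaximal.coprime_of_ne inferInstance inferInstance
        (fun h => hne (HeightOneSpectrum.ext h)))
  have hdvd : ∀ v ∈ t, v.asIdeal ∣ Ideal.span {((p : ℕ) : RingOfIntegers K)} := fun v hv =>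
    Ideal.dvd_iff_le.mpr ((Ideal.span_singleton_le_iff_mem _).mpr (hmem v hv))
  have hprod := Finset.prod_dvd_of_coprime hcop hdvd
  have hnorm : Ideal.absNorm (∏ v ∈ t, v.asIdeal) ∣ p ^ dK K := by
    rw [← absNorm_span_natCast p]
    exact Ideal.absNorm_dvd_absNorm_of_le (Ideal.le_of_dvd hprod)
  rw [map_prod] at hnorm
  have hpd : p ^ t.card ∣ p ^ dK K := by
    refine dvd_trans ?_ hnorm
    rw [← Finset.prod_const]
    apply Finset.prod_dvd_prod_of_dvd
    intro v hv
    obtain ⟨k, hk, _, he⟩ := resChar_spec v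
    rw [he, ht v hv]
    exact dvd_pow_self p (by omega)
  exact (Nat.pow_dvd_pow_iff_le_right hp.one_lt).mp hpd

lemma sum_finset_qv_le {s : ℝ} (hs : 1 < s)
    (T : Finset (HeightOneSpectrum (RingOfIntegers K))) :
    ∑ v ∈ T, (Ideal.absNorm v.asIdeal : ℝ) ^ (-s)
      ≤ (dK K : ℝ) * ∑' p : Nat.Primes, (p : ℝ) ^ (-s) := by
  classical
  have hsumP : Summable (fun p : Nat.Primes => (p : ℝ) ^ (-s)) :=
    (Real.summable_nat_rpow.mpr (by linarith)).subtype _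
  rw [← Finset.sum_fiberwise_of_maps_to
    (fun v hv => Finset.mem_image_of_mem resChar hv) (fun v => (Ideal.absNorm v.asIdeal : ℝ) ^ (-s))]
  have hprime : ∀ k ∈ T.image resChar, Nat.Prime k := by
    intro k hk
    obtain ⟨v, _, rfl⟩ := Finset.mem_image.mp hk
    obtain ⟨_, _, hp, _⟩ := resChar_spec v
    exact hp
  have hstep : ∀ k ∈ T.image resChar,
      (∑ v ∈ T.filter (fun v => resChar v = k), (Ideal.absNorm v.asIdeal : ℝ) ^ (-s))
        ≤ (dK K : ℝ) * (k : ℝ) ^ (-s) := by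
    intro k hk
    have hkp := hprime k hk
    have hterm : ∀ v ∈ T.filter (fun v => resChar v = k),
        (Ideal.absNorm v.asIdeal : ℝ) ^ (-s) ≤ (k : ℝ) ^ (-s) := by
      intro v hv
      obtain ⟨-, hvk⟩ := Finset.mem_filter.mp hv
      apply Real.rpow_le_rpow_of_nonpos (by exact_mod_cast hkp.pos) ?_ (by linarith)
      rw [← hvk]
      exact_mod_cast resChar_le_absNorm v
    calc (∑ v ∈ T.filter (fun v => resChar v = k), (Ideal.absNorm v.asIdeal : ℝ) ^ (-s))
        ≤ (T.filter (fun v => resChar v = k)).card • (k : ℝ) ^ (-s) :=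
          Finset.sum_le_card_nsmul _ _ _ hterm
      _ ≤ (dK K : ℝ) * (k : ℝ) ^ (-s) := by
          rw [nsmul_eq_mul]
          apply mul_le_mul_of_nonneg_right _ (by positivity)
          exact_mod_cast card_fiber_le hkp _ (fun v hv => (Finset.mem_filter.mp hv).2)
  calc _ ≤ ∑ k ∈ T.image resChar, (dK K : ℝ) * (k : ℝ) ^ (-s) := Finset.sum_le_sum hstep
    _ = (dK K : ℝ) * ∑ k ∈ T.image resChar, (k : ℝ) ^ (-s) := by rw [Finset.mul_sum]
    _ ≤ (dK K : ℝ) * ∑' p : Nat.Primes, (p : ℝ) ^ (-s) := by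
        apply mul_le_mul_of_nonneg_left _ (by positivity)
        have hind : Summable (Set.indicator {n : ℕ | n.Prime} (fun n : ℕ => (n : ℝ) ^ (-s))) :=
          summable_subtype_iff_indicator.mp hsumP
        calc (∑ k ∈ T.image resChar, (k : ℝ) ^ (-s))
            = ∑ k ∈ T.image resChar,
                Set.indicator {n : ℕ | n.Prime} (fun n : ℕ => (n : ℝ) ^ (-s)) k := by
              apply Finset.sum_congr rfl
              intro k hk
              exact (Set.indicator_of_mem (hprime k hk) (fun n : ℕ => (n : ℝ) ^ (-s))).symm
          _ ≤ ∑' n : ℕ, Set.indicator {n : ℕ | n.Prime} (fun n : ℕ => (n : ℝ) ^ (-s)) n :=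
              Summable.sum_le_tsum _ (fun n _ => Set.indicator_nonneg (fun i _ => by positivity) n) hind
          _ = ∑' p : Nat.Primes, (p : ℝ) ^ (-s) :=
              (tsum_subtype {n : ℕ | n.Prime} (fun n : ℕ => (n : ℝ) ^ (-s))).symm

lemma summable_qv {s : ℝ} (hs : 1 < s) :
    Summable (fun v : HeightOneSpectrum (RingOfIntegers K) =>
      (Ideal.absNorm v.asIdeal : ℝ) ^ (-s)) :=
  summable_of_sum_le (fun v => by positivity) (sum_finset_qv_le hs)

lemma tsum_qv_le {s : ℝ} (hs : 1 < s) :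
    (∑' v : HeightOneSpectrum (RingOfIntegers K), (Ideal.absNorm v.asIdeal : ℝ) ^ (-s))
      ≤ (dK K : ℝ) * ∑' p : Nat.Primes, (p : ℝ) ^ (-s) :=
  Summable.tsum_le_of_sum_le (summable_qv hs) (sum_finset_qv_le hs)

lemma summable_qv' {s : ℝ} (hs : 1 < s) :
    Summable (fun v : HeightOneSpectrum (RingOfIntegers K) => qv v ^ (-s)) :=
  summable_qv hs

lemma qv_pos' (v : HeightOneSpectrum (RingOfIntegers K)) : 0 < qv v := by
  have := two_le_absNorm v
  have h : (2:ℝ) ≤ qv v := by unfold qv; exact_mod_cast this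
  linarith

section
variable {B s : ℝ} (hB : 0 < B) (hs : 1 < s)
  {f : HeightOneSpectrum (RingOfIntegers K) → ℝ} (hf : ∀ v, |f v| ≤ B)

include hs hf hB

lemma summable_Z1 : Summable (fun v => f v * qv v ^ (-s)) := by
  apply Summable.of_abs
  apply Summable.of_nonneg_of_le (fun v => abs_nonneg _) (fun v => ?_)
    ((summable_qv' hs).mul_left B)
  have hq := qv_pos' v
  rw [abs_mul, abs_of_nonneg (by positivity : (0:ℝ) ≤ qv v ^ (-s))]
  exact mul_le_mul_of_nonneg_right (hf v) (by positivity)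

lemma summable_Z2 : Summable (fun v => f v ^ 2 * qv v ^ (-s)) := by
  apply Summable.of_nonneg_of_le (fun v => by have hq := qv_pos' v; positivity) (fun v => ?_)
    ((summable_qv' hs).mul_left (B^2))
  have := abs_le.mp (hf v)
  have hq := qv_pos' v
  exact mul_le_mul_of_nonneg_right (by nlinarith [this.1, this.2]) (by positivity)

lemma summable_ZF : Summable (fun v : {v : HeightOneSpectrum (RingOfIntegers K) // f v < 0} =>
    qv (v : HeightOneSpectrum (RingOfIntegers K)) ^ (-s)) :=
  (summable_qv' hs).subtype _

lemma summable_ind : Summable (Set.indicator {v : HeightOneSpectrum (RingOfIntegers K) | f v < 0}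
    (fun v => qv v ^ (-s))) :=
  summable_subtype_iff_indicator.mp (summable_ZF hB hs hf)

lemma ZF_eq : (∑' v : {v : HeightOneSpectrum (RingOfIntegers K) // f v < 0},
      qv (v : HeightOneSpectrum (RingOfIntegers K)) ^ (-s))
    = ∑' v, Set.indicator {v | f v < 0} (fun v => qv v ^ (-s)) v :=
  tsum_subtype {v : HeightOneSpectrum (RingOfIntegers K) | f v < 0}
    (fun v => qv v ^ (-s))

lemma Z2_le_key :
    (∑' v, f v ^ 2 * qv v ^ (-s)) ≤ B * (∑' v, f v * qv v ^ (-s))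
      + 2 * B ^ 2 * (∑' v : {v : HeightOneSpectrum (RingOfIntegers K) // f v < 0},
          qv (v : HeightOneSpectrum (RingOfIntegers K)) ^ (-s)) := by
  have hsum1 := summable_Z1 hB hs hf
  have hsum2 := summable_Z2 hB hs hf
  have hind := summable_ind hB hs hf
  rw [ZF_eq hB hs hf]
  have step : (∑' v, f v ^ 2 * qv v ^ (-s)) ≤
      ∑' v, (B * (f v * qv v ^ (-s))
        + 2 * B ^ 2 * Set.indicator {v | f v < 0} (fun v => qv v ^ (-s)) v) := by
    apply Summable.tsum_le_tsum _ hsum2 ((hsum1.mul_left B).add (hind.mul_left (2 * B^2)))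
    intro v
    have habs := abs_le.mp (hf v)
    have hq0 := qv_pos' v
    have hq : (0:ℝ) ≤ qv v ^ (-s) := by positivity
    by_cases hv : f v < 0
    · rw [Set.indicator_of_mem (by exact hv)]
      have hcoef : f v ^ 2 ≤ B * f v + 2 * B ^ 2 := by nlinarith [habs.1, habs.2]
      nlinarith [mul_le_mul_of_nonneg_right hcoef hq]
    · rw [Set.indicator_of_notMem (by exact hv)]
      push_neg at hv
      have hcoef : f v ^ 2 ≤ B * f v := by nlinarith [habs.2]
      nlinarith [mul_le_mul_of_nonneg_right hcoef hq]
  rw [Summable.tsum_add (hsum1.mul_left B) (hind.mul_left (2 * B^2)), tsum_mul_left, tsum_mul_left] at step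
  exact step

lemma Z1_le : (∑' v, f v * qv v ^ (-s)) ≤ B * ∑' v : HeightOneSpectrum (RingOfIntegers K), qv v ^ (-s) := by
  rw [← tsum_mul_left]
  refine Summable.tsum_le_tsum (fun v => ?_) (summable_Z1 hB hs hf)
    (((summable_qv' (K := K)) hs).mul_left B)
  have := (abs_le.mp (hf v)).2
  have hq := qv_pos' v
  exact mul_le_mul_of_nonneg_right this (by positivity)

lemma ZF_le : (∑' v : {v : HeightOneSpectrum (RingOfIntegers K) // f v < 0},
      qv (v : HeightOneSpectrum (RingOfIntegers K)) ^ (-s))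
      ≤ ∑' v : HeightOneSpectrum (RingOfIntegers K), qv v ^ (-s) := by
  rw [ZF_eq hB hs hf]
  refine Summable.tsum_le_tsum (fun v => ?_) (summable_ind hB hs hf) ((summable_qv' (K := K)) hs)
  exact Set.indicator_le_self' (fun v _ => by have hq := qv_pos' v; positivity) v

lemma Z2_nonneg : (0:ℝ) ≤ ∑' v, f v ^ 2 * qv v ^ (-s) :=
  tsum_nonneg (fun v => by have hq := qv_pos' v; positivity)

lemma ZF_nonneg : (0:ℝ) ≤ ∑' v : {v : HeightOneSpectrum (RingOfIntegers K) // f v < 0},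
    qv (v : HeightOneSpectrum (RingOfIntegers K)) ^ (-s) :=
  tsum_nonneg (fun v => by have hq := qv_pos' (v : HeightOneSpectrum (RingOfIntegers K)); positivity)

end
lemma aux_limsup (L Z1 Z2 ZF : ℝ → ℝ) (B C m M : ℝ) (hB : 0 < B) (hC : 0 ≤ C)
    (hev : ∀ᶠ s in 𝓝[>] (1:ℝ), 0 < L s ∧ 0 ≤ Z2 s ∧ 0 ≤ ZF s ∧
      Z2 s ≤ B * Z1 s + 2 * B^2 * ZF s ∧ Z1 s ≤ B * C * L s ∧ ZF s ≤ C * L s)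
    (hm : m ≤ limsup (fun s => Z2 s / L s) (𝓝[>] (1:ℝ)))
    (hM : limsup (fun s => Z1 s / L s) (𝓝[>] (1:ℝ)) ≤ M) :
    (m - M * B) / (2 * B ^ 2) ≤ limsup (fun s => ZF s / L s) (𝓝[>] (1:ℝ)) := by
  set l : Filter ℝ := 𝓝[>] (1:ℝ)
  haveI : l.NeBot := nhdsGT_neBot 1
  set A := limsup (fun s => ZF s / L s) l with hA
  have hbZF : IsBoundedUnder (· ≤ ·) l (fun s => ZF s / L s) := by
    refine ⟨C, eventually_map.mpr ?_⟩
    filter_upwards [hev] with s ⟨hL, _, _, _, _, hZF⟩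
    exact div_le_of_le_mul₀ (by positivity) hC (by linarith [hZF])
  have hbZ1 : IsBoundedUnder (· ≤ ·) l (fun s => Z1 s / L s) := by
    refine ⟨B * C, eventually_map.mpr ?_⟩
    filter_upwards [hev] with s ⟨hL, _, _, _, hZ1, _⟩
    exact div_le_of_le_mul₀ (by positivity) (by positivity) (by linarith [hZ1])
  have hco : IsCoboundedUnder (· ≤ ·) l (fun s => Z2 s / L s) := by
    apply isCoboundedUnder_le_of_eventually_le l (x := 0)
    filter_upwards [hev] with s ⟨hL, h2, _, _, _, _⟩
    positivity
  have key : ∀ ε > (0:ℝ), m ≤ B * (M + ε) + 2 * B^2 * (A + ε) := by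
    intro ε hε
    have h1 : ∀ᶠ s in l, Z1 s / L s < M + ε := by
      apply eventually_lt_of_limsup_lt (lt_of_le_of_lt hM (by linarith)) hbZ1
    have h2 : ∀ᶠ s in l, ZF s / L s < A + ε :=
      eventually_lt_of_limsup_lt (by linarith) hbZF
    have h3 : ∀ᶠ s in l, Z2 s / L s ≤ B * (M + ε) + 2 * B^2 * (A + ε) := by
      filter_upwards [hev, h1, h2] with s ⟨hL, _, hZF0, hkey, _, _⟩ h1 h2
      have e1 : Z2 s / L s ≤ B * (Z1 s / L s) + 2 * B^2 * (ZF s / L s) := by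
        rw [div_le_iff₀ hL]
        have e2 : Z1 s / L s * L s = Z1 s := div_mul_cancel₀ _ hL.ne'
        have e3 : ZF s / L s * L s = ZF s := div_mul_cancel₀ _ hL.ne'
        nlinarith [hkey]
      have hZFs : ZF s / L s ≥ 0 := by positivity
      nlinarith [h1, h2, e1]
    exact hm.trans (limsup_le_of_le hco h3)
  have hmain : m ≤ B * M + 2 * B^2 * A := by
    by_contra hcon
    push_neg at hcon
    set ε := (m - (B * M + 2 * B^2 * A)) / (B + 2 * B^2 + 1) with hε
    have hεpos : 0 < ε := by
      apply div_pos (by linarith) (by positivity)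
    have := key ε hεpos
    have hd : ε * (B + 2 * B^2 + 1) = m - (B * M + 2 * B^2 * A) := by
      rw [hε]; field_simp
    nlinarith [hεpos]
  rw [div_le_iff₀ (by positivity)]
  linarith

lemma eventually_facts {K : Type*} [Field K] [NumberField K]
    {B : ℝ} (hB : 0 < B) {f : HeightOneSpectrum (RingOfIntegers K) → ℝ}
    (hf : ∀ v, |f v| ≤ B) :
    ∀ᶠ s in 𝓝[>] (1:ℝ),
      0 < -Real.log (s - 1) ∧
      0 ≤ (∑' v, (f v) ^ 2 * qv v ^ (-s)) ∧
      0 ≤ (∑' v : {v // f v < 0}, qv (v : HeightOneSpectrum (RingOfIntegers K)) ^ (-s)) ∧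
      (∑' v, (f v) ^ 2 * qv v ^ (-s)) ≤ B * (∑' v, f v * qv v ^ (-s))
        + 2 * B ^ 2 * (∑' v : {v // f v < 0}, qv (v : HeightOneSpectrum (RingOfIntegers K)) ^ (-s)) ∧
      (∑' v, f v * qv v ^ (-s)) ≤ B * (2 * (dK K : ℝ)) * (-Real.log (s - 1)) ∧
      (∑' v : {v // f v < 0}, qv (v : HeightOneSpectrum (RingOfIntegers K)) ^ (-s))
        ≤ (2 * (dK K : ℝ)) * (-Real.log (s - 1)) := by
  have hIoo : ∀ᶠ s in 𝓝[>] (1:ℝ), s ∈ Set.Ioo (1:ℝ) (5/4) :=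
    Ioo_mem_nhdsGT_of_mem ⟨le_refl 1, by norm_num⟩
  have hzeta : ∀ᶠ s in 𝓝[>] (1:ℝ), (s - 1) * ∑' (n : ℕ), 1 / (n : ℝ) ^ s ≤ 2 :=
    tendsto_sub_mul_tsum_nat_rpow.eventually (eventually_le_nhds one_lt_two)
  filter_upwards [hIoo, hzeta] with s hs12 hz
  obtain ⟨hs1, hs54⟩ := hs12
  have hL : 0 < -Real.log (s - 1) := by
    have := Real.log_neg (x := s - 1) (by linarith) (by linarith)
    linarith
  have hZbound : (∑' v : HeightOneSpectrum (RingOfIntegers K), qv v ^ (-s))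
      ≤ (2 * (dK K : ℝ)) * (-Real.log (s - 1)) := by
    have h1 : (∑' v : HeightOneSpectrum (RingOfIntegers K), qv v ^ (-s))
        ≤ (dK K : ℝ) * ∑' p : Nat.Primes, (p : ℝ) ^ (-s) := tsum_qv_le hs1
    have h2 : (∑' p : Nat.Primes, (p : ℝ) ^ (-s)) ≤ 2 * (-Real.log (s - 1)) :=
      primes_rpow_le_log hs1 hs54.le hz
    calc (∑' v : HeightOneSpectrum (RingOfIntegers K), qv v ^ (-s))
        ≤ (dK K : ℝ) * (2 * (-Real.log (s - 1))) :=
          h1.trans (mul_le_mul_of_nonneg_left h2 (by positivity))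
      _ = (2 * (dK K : ℝ)) * (-Real.log (s - 1)) := by ring
  refine ⟨hL, Z2_nonneg hB hs1 hf, ZF_nonneg hB hs1 hf, Z2_le_key hB hs1 hf, ?_, ?_⟩
  · calc (∑' v, f v * qv v ^ (-s))
        ≤ B * ∑' v : HeightOneSpectrum (RingOfIntegers K), qv v ^ (-s) := Z1_le hB hs1 hf
      _ ≤ B * ((2 * (dK K : ℝ)) * (-Real.log (s - 1))) :=
          mul_le_mul_of_nonneg_left hZbound hB.le
      _ = B * (2 * (dK K : ℝ)) * (-Real.log (s - 1)) := by ring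
  · exact (ZF_le hB hs1 hf).trans hZbound

end helpers

/-- Density principle over number fields: with `Z₂(s) = Σ f_v² q_v^{-s}`,
`Z₁(s) = Σ f_v q_v^{-s}`, `m ≤ limsup_{s→1⁺} Z₂(s)/(-log(s-1))` and
`limsup_{s→1⁺} Z₁(s)/(-log(s-1)) ≤ M`, the upper Dirichlet density of
`{v | f v < 0}` is at least `(m - M·B)/(2B²)`. -/
theorem stmt_1 {K : Type*} [Field K] [NumberField K]
    (B : ℝ) (hB : 0 < B)
    (f : HeightOneSpectrum (RingOfIntegers K) → ℝ)
    (hf : ∀ v, |f v| ≤ B)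
    (m M : ℝ)
    (hm : m ≤ Filter.limsup
      (fun s : ℝ => (∑' v, (f v) ^ 2 * qv v ^ (-s)) / (-Real.log (s - 1)))
      (𝓝[>] (1 : ℝ)))
    (hM : Filter.limsup
      (fun s : ℝ => (∑' v, f v * qv v ^ (-s)) / (-Real.log (s - 1)))
      (𝓝[>] (1 : ℝ)) ≤ M) :
    (m - M * B) / (2 * B ^ 2) ≤ Filter.limsup
      (fun s : ℝ => (∑' v : {v // f v < 0}, qv (v : HeightOneSpectrum (RingOfIntegers K)) ^ (-s)) / (-Real.log (s - 1)))
      (𝓝[>] (1 : ℝ)) := by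
  exact aux_limsup (fun s => -Real.log (s - 1))
    (fun s => ∑' v, f v * qv v ^ (-s))
    (fun s => ∑' v, (f v) ^ 2 * qv v ^ (-s))
    (fun s => ∑' v : {v // f v < 0}, qv (v : HeightOneSpectrum (RingOfIntegers K)) ^ (-s))
    B (2 * (dK K : ℝ)) m M hB (by positivity)
    (eventually_facts hB hf) hm hM
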